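/- Let α ∈ (0,1), T > 0, and let h : [0,T] → ℝ be C¹ with h(0) = h'(0) = 0 and [h']_{α/2;[0,T]} < ∞. Let v(t,y) = ∫₀^t P(s,y) h(t-s) ds. Then for all t ∈ [0,T] and y₁ > y₂ ≥ 0 with y₁ + y₂ > 2(y₁ - y₂), one has |∂_t v(t, y₁) - ∂_t v(t, y₂)| ≤ C [h']_{α/2;[0,T]} (y₁ - y₂)^{α}, where C depends only on α. -/

import Mathlib

open MeasureTheory Real

/-- The Poisson (boundary) kernel for the heat equation on the half-line. -/
noncomputable def heatP (s y : ℝ) : ℝ :=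
  y / (2 * Real.sqrt Real.pi * s ^ ((3:ℝ)/2)) * Real.exp (-(y^2) / (4*s))

/-- The representation of the time derivative `∂ₜ v` of the solution
`v(t,y) = ∫₀ᵗ P(s,y) h(t-s) ds`, namely
`∂ₜ v(t,y) = ∫₀^∞ P(r,1) h̃'(t - y² r) dr`, where `h̃'` is the extension of
`h'` by zero to negative times. -/
noncomputable def dtv (h' : ℝ → ℝ) (t y : ℝ) : ℝ :=
  ∫ r in Set.Ioi (0:ℝ), heatP r 1 * (if 0 ≤ t - y^2 * r then h' (t - y^2 * r) else 0)

open Set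

noncomputable def dheatP (s y : ℝ) : ℝ :=
  1 / (2 * Real.sqrt Real.pi * s ^ ((3:ℝ)/2)) * Real.exp (-(y^2) / (4*s)) * (1 - y^2 / (2*s))

lemma exp_neg_le_factorial_div (n : ℕ) {x : ℝ} (hx : 0 < x) :
    Real.exp (-x) ≤ n.factorial / x ^ n := by
  have h1 : x ^ n / n.factorial ≤ Real.exp x := by
    calc x ^ n / n.factorial ≤ ∑ i ∈ Finset.range (n+1), x ^ i / i.factorial :=
          Finset.single_le_sum (f := fun i => x ^ i / (i.factorial : ℝ))
            (fun i _ => by positivity) (Finset.self_mem_range_succ n)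
      _ ≤ Real.exp x := Real.sum_le_exp_of_nonneg hx.le _
  rw [Real.exp_neg, inv_le_comm₀ (Real.exp_pos x) (by positivity), inv_div]
  rwa [div_le_iff₀ (by positivity)] at h1 ⊢

lemma master_integrable {c p : ℝ} (hc : 0 < c) (hp : 1 < p) :
    IntegrableOn (fun u : ℝ => Real.exp (-c / u) * u ^ (-p)) (Ioi 0) := by
  have hcont : ContinuousOn (fun u : ℝ => Real.exp (-c / u) * u ^ (-p)) (Ioi 0) := by
    apply ContinuousOn.mul
    · apply Real.continuous_exp.comp_continuousOn
      exact ContinuousOn.div continuousOn_const continuousOn_id fun x hx => ne_of_gt hx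
    · exact fun x hx => (Real.continuousAt_rpow_const x _ (Or.inl (ne_of_gt hx))).continuousWithinAt
  have hmeas := hcont.aestronglyMeasurable (μ := volume) measurableSet_Ioi
  have hsplit : Ioi (0:ℝ) = Ioc 0 1 ∪ Ioi 1 := (Ioc_union_Ioi_eq_Ioi zero_le_one).symm
  rw [hsplit] at hmeas ⊢
  apply IntegrableOn.union
  · -- bounded on Ioc 0 1
    obtain ⟨n, hn⟩ := exists_nat_ge p
    apply Integrable.mono' (g := fun _ => (n.factorial : ℝ) * (c⁻¹) ^ n)
      (integrable_const _) (hmeas.mono_set subset_union_left)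
    filter_upwards [ae_restrict_mem measurableSet_Ioc] with u hu
    obtain ⟨hu0, hu1⟩ := hu
    rw [Real.norm_eq_abs, abs_of_nonneg (by positivity)]
    have h1 : Real.exp (-c / u) ≤ n.factorial / (c / u) ^ n := by
      rw [neg_div]
      exact exp_neg_le_factorial_div n (by positivity)
    have h2 : u ^ (-p) = u ^ (-(n:ℝ)) * u ^ ((n:ℝ) - p) := by
      rw [← Real.rpow_add hu0]; ring_nf
    calc Real.exp (-c/u) * u ^ (-p) ≤ (n.factorial / (c/u)^n) * (u ^ (-(n:ℝ)) * u ^ ((n:ℝ)-p)) := by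
          rw [h2]; exact mul_le_mul_of_nonneg_right h1 (by positivity)
      _ = (n.factorial * c⁻¹ ^ n) * u ^ ((n:ℝ) - p) := by
          rw [div_pow, div_div_eq_mul_div, Real.rpow_neg hu0.le, Real.rpow_natCast]
          field_simp
          ring_nf
          rw [← mul_pow, mul_inv_cancel₀ hc.ne', one_pow]
      _ ≤ (n.factorial * c⁻¹ ^ n) * 1 := by
          gcongr
          exact Real.rpow_le_one hu0.le hu1 (by linarith)
      _ = n.factorial * c⁻¹ ^ n := mul_one _
  · apply Integrable.mono' (g := fun u => u ^ (-p))
      (integrableOn_Ioi_rpow_of_lt (by linarith) one_pos)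
      (hmeas.mono_set subset_union_right)
    filter_upwards [ae_restrict_mem measurableSet_Ioi] with u hu
    have hu0 : (0:ℝ) < u := lt_trans one_pos hu
    rw [Real.norm_eq_abs, abs_of_nonneg (by positivity)]
    calc Real.exp (-c/u) * u ^ (-p) ≤ 1 * u ^ (-p) := by
          have hup : (0:ℝ) ≤ u ^ (-p) := by positivity
          have hle : Real.exp (-c/u) ≤ 1 := by
            refine Real.exp_le_one_iff.mpr ?_
            rw [neg_div]
            have : 0 < c / u := by positivity
            linarith
          exact mul_le_mul_of_nonneg_right hle hup
      _ = u ^ (-p) := one_mul _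

lemma sqrtpi_pos : 0 < Real.sqrt Real.pi := Real.sqrt_pos.mpr Real.pi_pos

lemma hasDerivAt_heatP {s : ℝ} (hs : 0 < s) (y : ℝ) :
    HasDerivAt (fun y => heatP s y) (dheatP s y) y := by
  have hA : (0:ℝ) < 2 * Real.sqrt Real.pi * s ^ ((3:ℝ)/2) := by
    have := sqrtpi_pos; positivity
  have h1 : HasDerivAt (fun y : ℝ => y / (2 * Real.sqrt Real.pi * s ^ ((3:ℝ)/2)))
      (1 / (2 * Real.sqrt Real.pi * s ^ ((3:ℝ)/2))) y := by
    simpa using (hasDerivAt_id y).div_const (2 * Real.sqrt Real.pi * s ^ ((3:ℝ)/2))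
  have h2 : HasDerivAt (fun y : ℝ => -(y^2) / (4*s)) (-(2*y) / (4*s)) y := by
    have := ((hasDerivAt_pow 2 y).neg).div_const (4*s)
    simpa using this
  have h3 := h2.exp
  have h4 := h1.mul h3
  refine h4.congr_deriv ?_
  unfold dheatP
  field_simp
  ring
lemma heatP_scale {y r : ℝ} (hy : 0 < y) (hr : 0 < r) :
    heatP (y^2*r) y = (y^2)⁻¹ * heatP r 1 := by
  unfold heatP
  have h1 : ((y^2*r) : ℝ) ^ ((3:ℝ)/2) = y^3 * r ^ ((3:ℝ)/2) := by
    rw [Real.mul_rpow (by positivity) hr.le, ← Real.rpow_natCast y 2,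
      ← Real.rpow_mul hy.le, ← Real.rpow_natCast y 3]
    norm_num
  have h2 : -(y^2) / (4*(y^2*r)) = -(1^2) / (4*r) := by
    rw [neg_div, neg_div]
    congr 1
    field_simp
  rw [h1, h2]
  have h3 : Real.sqrt Real.pi ≠ 0 := ne_of_gt sqrtpi_pos
  have h5 : r ^ ((3:ℝ)/2) ≠ 0 := by positivity
  have key : y / (2 * Real.sqrt Real.pi * (y^3 * r ^ ((3:ℝ)/2)))
      = (y^2)⁻¹ * (1 / (2 * Real.sqrt Real.pi * r ^ ((3:ℝ)/2))) := by
    field_simp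
  rw [key]; ring

lemma dheatP_scale {y r : ℝ} (hy : 0 < y) (hr : 0 < r) :
    dheatP (y^2*r) y = (y^3)⁻¹ * dheatP r 1 := by
  unfold dheatP
  have h1 : ((y^2*r) : ℝ) ^ ((3:ℝ)/2) = y^3 * r ^ ((3:ℝ)/2) := by
    rw [Real.mul_rpow (by positivity) hr.le, ← Real.rpow_natCast y 2,
      ← Real.rpow_mul hy.le, ← Real.rpow_natCast y 3]
    norm_num
  have h2 : -(y^2) / (4*(y^2*r)) = -(1^2) / (4*r) := by
    rw [neg_div, neg_div]; congr 1; field_simp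
  have h4 : y^2 / (2*(y^2*r)) = 1^2 / (2*r) := by field_simp
  rw [h1, h2, h4]
  have h3 : Real.sqrt Real.pi ≠ 0 := ne_of_gt sqrtpi_pos
  have h5 : r ^ ((3:ℝ)/2) ≠ 0 := by positivity
  have key : 1 / (2 * Real.sqrt Real.pi * (y^3 * r ^ ((3:ℝ)/2)))
      = (y^3)⁻¹ * (1 / (2 * Real.sqrt Real.pi * r ^ ((3:ℝ)/2))) := by
    field_simp
  rw [key]; ring

lemma contOn_exp_part (y : ℝ) :
    ContinuousOn (fun u : ℝ => Real.exp (-(y^2) / (4*u))) (Ioi 0) := by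
  apply Real.continuous_exp.comp_continuousOn
  apply ContinuousOn.div continuousOn_const (by fun_prop)
  intro x hx
  have : (0:ℝ) < x := hx
  positivity

lemma contOn_rpow32 : ContinuousOn (fun u : ℝ => u ^ ((3:ℝ)/2)) (Ioi 0) := fun x hx =>
  (Real.continuousAt_rpow_const x _ (Or.inl (ne_of_gt hx))).continuousWithinAt

lemma contOn_heatP (y : ℝ) : ContinuousOn (fun u => heatP u y) (Ioi 0) := by
  apply ContinuousOn.mul _ (contOn_exp_part y)
  apply ContinuousOn.div continuousOn_const (continuousOn_const.mul contOn_rpow32)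
  intro x hx
  have h1 : (0:ℝ) < x := hx
  have := sqrtpi_pos
  show 2 * Real.sqrt Real.pi * x ^ ((3:ℝ)/2) ≠ 0
  positivity

lemma contOn_dheatP (y : ℝ) : ContinuousOn (fun u => dheatP u y) (Ioi 0) := by
  apply ContinuousOn.mul
  · apply ContinuousOn.mul _ (contOn_exp_part y)
    apply ContinuousOn.div continuousOn_const (continuousOn_const.mul contOn_rpow32)
    intro x hx
    have h1 : (0:ℝ) < x := hx
    have := sqrtpi_pos
    show 2 * Real.sqrt Real.pi * x ^ ((3:ℝ)/2) ≠ 0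
    positivity
  · apply ContinuousOn.sub continuousOn_const
    apply ContinuousOn.div continuousOn_const (by fun_prop)
    intro x hx
    have : (0:ℝ) < x := hx
    positivity

lemma heatP_eq {u y : ℝ} (hu : 0 < u) :
    heatP u y = (y/(2*Real.sqrt Real.pi)) * (Real.exp (-(y^2/4)/u) * u ^ (-(3:ℝ)/2)) := by
  unfold heatP
  have h3 : Real.sqrt Real.pi ≠ 0 := ne_of_gt sqrtpi_pos
  have h5 : u ^ ((3:ℝ)/2) ≠ 0 := by positivity
  have he : -(y^2) / (4*u) = -(y^2/4)/u := by ring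
  rw [he, show (-(3:ℝ)/2) = -((3:ℝ)/2) by norm_num, Real.rpow_neg hu.le]
  field_simp

lemma heatP_nonneg {u y : ℝ} (hu : 0 < u) (hy : 0 ≤ y) : 0 ≤ heatP u y := by
  unfold heatP
  have := sqrtpi_pos
  positivity

lemma abs_dheatP_le {u y : ℝ} (hu : 0 < u) :
    |dheatP u y| ≤ (1/(2*Real.sqrt Real.pi)) * (Real.exp (-(y^2/4)/u) * u ^ (-(3:ℝ)/2))
      + (y^2/(4*Real.sqrt Real.pi)) * (Real.exp (-(y^2/4)/u) * u ^ (-(5:ℝ)/2)) := by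
  have hsp := sqrtpi_pos
  have h5 : u ^ ((3:ℝ)/2) ≠ 0 := by positivity
  have he : -(y^2) / (4*u) = -(y^2/4)/u := by ring
  unfold dheatP
  rw [he, abs_mul, abs_mul]
  have h1 : |1 / (2 * Real.sqrt Real.pi * u ^ ((3:ℝ)/2))|
      = (1/(2*Real.sqrt Real.pi)) * u ^ (-(3:ℝ)/2) := by
    rw [abs_of_nonneg (by positivity), show (-(3:ℝ)/2) = -((3:ℝ)/2) by norm_num,
      Real.rpow_neg hu.le]
    field_simp
  have h2 : |Real.exp (-(y^2/4)/u)| = Real.exp (-(y^2/4)/u) := abs_of_nonneg (Real.exp_pos _).le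
  have h3 : |1 - y^2/(2*u)| ≤ 1 + y^2/(2*u) := by
    rw [abs_sub_comm]  -- |a-b| form
    calc |y^2/(2*u) - 1| ≤ |y^2/(2*u)| + |(1:ℝ)| := abs_sub _ _
      _ = y^2/(2*u) + 1 := by rw [abs_of_nonneg (by positivity), abs_one]
      _ = 1 + y^2/(2*u) := by ring
  rw [h1, h2]
  calc (1/(2*Real.sqrt Real.pi)) * u ^ (-(3:ℝ)/2) * Real.exp (-(y^2/4)/u) * |1 - y^2/(2*u)|
      ≤ (1/(2*Real.sqrt Real.pi)) * u ^ (-(3:ℝ)/2) * Real.exp (-(y^2/4)/u) * (1 + y^2/(2*u)) := by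
        apply mul_le_mul_of_nonneg_left h3 (by positivity)
    _ = (1/(2*Real.sqrt Real.pi)) * (Real.exp (-(y^2/4)/u) * u ^ (-(3:ℝ)/2))
      + (y^2/(4*Real.sqrt Real.pi)) * (Real.exp (-(y^2/4)/u) * (u ^ (-(3:ℝ)/2) * u⁻¹)) := by
        ring
    _ = _ := by
        rw [← Real.rpow_neg_one u, ← Real.rpow_add hu]
        norm_num

lemma contOn_rpow_c (c : ℝ) : ContinuousOn (fun u : ℝ => u ^ c) (Ioi 0) := fun x hx =>
  (Real.continuousAt_rpow_const x _ (Or.inl (ne_of_gt hx))).continuousWithinAt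

lemma abs_dheatP_mul_le {u y α : ℝ} (hu : 0 < u) :
    |dheatP u y| * u ^ (α/2)
      ≤ (1/(2*Real.sqrt Real.pi)) * (Real.exp (-(y^2/4)/u) * u ^ (-((3-α)/2)))
        + (y^2/(4*Real.sqrt Real.pi)) * (Real.exp (-(y^2/4)/u) * u ^ (-((5-α)/2))) := by
  have e1 : u ^ (-(3:ℝ)/2) * u ^ (α/2) = u ^ (-((3-α)/2)) := by
    rw [← Real.rpow_add hu]; congr 1; ring
  have e2 : u ^ (-(5:ℝ)/2) * u ^ (α/2) = u ^ (-((5-α)/2)) := by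
    rw [← Real.rpow_add hu]; congr 1; ring
  calc |dheatP u y| * u ^ (α/2)
      ≤ ((1/(2*Real.sqrt Real.pi)) * (Real.exp (-(y^2/4)/u) * u ^ (-(3:ℝ)/2))
        + (y^2/(4*Real.sqrt Real.pi)) * (Real.exp (-(y^2/4)/u) * u ^ (-(5:ℝ)/2))) * u ^ (α/2) :=
        mul_le_mul_of_nonneg_right (abs_dheatP_le hu) (Real.rpow_nonneg hu.le _)
    _ = (1/(2*Real.sqrt Real.pi)) * (Real.exp (-(y^2/4)/u) * (u ^ (-(3:ℝ)/2) * u ^ (α/2)))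
        + (y^2/(4*Real.sqrt Real.pi)) * (Real.exp (-(y^2/4)/u) * (u ^ (-(5:ℝ)/2) * u ^ (α/2))) := by
        ring
    _ = _ := by rw [e1, e2]

lemma moment_integrable {y α : ℝ} (hy : 0 < y) (hα0 : 0 < α) (hα1 : α < 1) :
    IntegrableOn (fun u : ℝ => |dheatP u y| * u ^ (α/2)) (Ioi 0) := by
  have hc : 0 < y^2/4 := by positivity
  have hmeas : AEStronglyMeasurable (fun u : ℝ => |dheatP u y| * u ^ (α/2))
      (volume.restrict (Ioi 0)) :=
    (((contOn_dheatP y).abs).mul (contOn_rpow_c (α/2))).aestronglyMeasurable measurableSet_Ioi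
  apply Integrable.mono'
    (((master_integrable hc (by linarith : (1:ℝ) < (3-α)/2)).const_mul
        (1/(2*Real.sqrt Real.pi))).add
      ((master_integrable hc (by linarith : (1:ℝ) < (5-α)/2)).const_mul
        (y^2/(4*Real.sqrt Real.pi)))) hmeas
  filter_upwards [ae_restrict_mem measurableSet_Ioi] with u hu
  rw [Real.norm_eq_abs,
    abs_of_nonneg (mul_nonneg (abs_nonneg _) (Real.rpow_nonneg (le_of_lt hu) _))]
  exact abs_dheatP_mul_le hu

lemma heatP_integrable {y : ℝ} (hy : 0 < y) : IntegrableOn (fun u => heatP u y) (Ioi 0) := by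
  have hc : 0 < y^2/4 := by positivity
  apply Integrable.mono'
    ((master_integrable hc (by norm_num : (1:ℝ) < 3/2)).const_mul (y/(2*Real.sqrt Real.pi)))
    ((contOn_heatP y).aestronglyMeasurable measurableSet_Ioi)
  filter_upwards [ae_restrict_mem measurableSet_Ioi] with u hu
  rw [Real.norm_eq_abs, abs_of_nonneg (heatP_nonneg hu hy.le), heatP_eq hu]
  rw [show (-(3:ℝ)/2) = -((3:ℝ)/2) by norm_num]

lemma heatP_mul_rpow_integrable {y α : ℝ} (hy : 0 < y) (hα0 : 0 < α) (hα1 : α < 1) :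
    IntegrableOn (fun u : ℝ => heatP u y * u ^ (α/2)) (Ioi 0) := by
  have hc : 0 < y^2/4 := by positivity
  apply Integrable.mono'
    ((master_integrable hc (by linarith : (1:ℝ) < (3-α)/2)).const_mul (y/(2*Real.sqrt Real.pi)))
    (((contOn_heatP y).mul (contOn_rpow_c (α/2))).aestronglyMeasurable measurableSet_Ioi)
  filter_upwards [ae_restrict_mem measurableSet_Ioi] with u hu
  rw [Real.norm_eq_abs, Pi.mul_apply,
    abs_of_nonneg (mul_nonneg (heatP_nonneg hu hy.le) (Real.rpow_nonneg (le_of_lt hu) _)),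
    heatP_eq hu]
  have e1 : u ^ (-(3:ℝ)/2) * u ^ (α/2) = u ^ (-((3-α)/2)) := by
    rw [← Real.rpow_add hu]; congr 1; ring
  calc (y/(2*Real.sqrt Real.pi)) * (Real.exp (-(y^2/4)/u) * u ^ (-(3:ℝ)/2)) * u ^ (α/2)
      = (y/(2*Real.sqrt Real.pi)) * (Real.exp (-(y^2/4)/u) * (u ^ (-(3:ℝ)/2) * u ^ (α/2))) := by
        ring
    _ ≤ _ := le_of_eq (by rw [e1])

lemma moment_scale {y α : ℝ} (hy : 0 < y) :
    ∫ u in Ioi (0:ℝ), |dheatP u y| * u ^ (α/2)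
      = y ^ (α-1) * ∫ w in Ioi (0:ℝ), |dheatP w 1| * w ^ (α/2) := by
  have hy2 : (0:ℝ) < y^2 := by positivity
  have h0 := integral_comp_mul_left_Ioi (fun u => |dheatP u y| * u ^ (α/2)) 0 hy2
  rw [mul_zero, smul_eq_mul] at h0
  have h : (∫ r in Ioi (0:ℝ), |dheatP (y^2*r) y| * (y^2*r) ^ (α/2))
      = (y^2)⁻¹ * ∫ u in Ioi (0:ℝ), |dheatP u y| * u ^ (α/2) := h0
  have congr1 : ∫ r in Ioi (0:ℝ), |dheatP (y^2*r) y| * (y^2*r) ^ (α/2)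
      = ∫ r in Ioi (0:ℝ), y ^ (α-3) * (|dheatP r 1| * r ^ (α/2)) := by
    apply setIntegral_congr_fun measurableSet_Ioi
    intro r hr
    have hr0 : (0:ℝ) < r := hr
    dsimp only
    rw [dheatP_scale hy hr0, abs_mul, abs_of_nonneg (by positivity : (0:ℝ) ≤ (y^3)⁻¹)]
    have e2 : ((y^2*r):ℝ) ^ (α/2) = y ^ α * r ^ (α/2) := by
      rw [Real.mul_rpow (by positivity) hr0.le, ← Real.rpow_natCast y 2,
        ← Real.rpow_mul hy.le]
      have : ((2:ℕ):ℝ) * (α/2) = α := by push_cast; ring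
      rw [this]
    have e3 : ((y^3)⁻¹ : ℝ) = y ^ (-(3:ℝ)) := by
      rw [← Real.rpow_natCast y 3, ← Real.rpow_neg hy.le]
      norm_num
    have e4 : y ^ (α-3) = y ^ α * y ^ (-(3:ℝ)) := by
      rw [← Real.rpow_add hy]; ring_nf
    rw [e2, e3, e4]
    ring
  rw [congr1, MeasureTheory.integral_const_mul] at h
  have key : ∫ u in Ioi (0:ℝ), |dheatP u y| * u ^ (α/2)
      = y^2 * (y ^ (α-3) * ∫ w in Ioi (0:ℝ), |dheatP w 1| * w ^ (α/2)) := by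
    rw [h, ← mul_assoc, mul_inv_cancel₀ (ne_of_gt hy2), one_mul]
  rw [key, ← mul_assoc]
  congr 1
  rw [← Real.rpow_natCast y 2, ← Real.rpow_add hy]
  congr 1
  push_cast
  ring

lemma dtv_rep {h' : ℝ → ℝ} {t y : ℝ} (hy : 0 < y) :
    dtv h' t y = ∫ u in Ioi (0:ℝ), heatP u y * (if 0 ≤ t - u then h' (t-u) else 0) := by
  have hy2 : (0:ℝ) < y^2 := by positivity
  have h0 := integral_comp_mul_left_Ioi
    (fun u => heatP u y * (if 0 ≤ t - u then h' (t-u) else 0)) 0 hy2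
  rw [mul_zero, smul_eq_mul] at h0
  have h : (∫ r in Ioi (0:ℝ), heatP (y^2*r) y * (if 0 ≤ t - y^2*r then h' (t-y^2*r) else 0))
      = (y^2)⁻¹ * ∫ u in Ioi (0:ℝ), heatP u y * (if 0 ≤ t - u then h' (t-u) else 0) := h0
  calc dtv h' t y
      = ∫ r in Ioi (0:ℝ),
          y^2 * (heatP (y^2*r) y * (if 0 ≤ t - y^2*r then h' (t-y^2*r) else 0)) := by
        unfold dtv
        apply setIntegral_congr_fun measurableSet_Ioi
        intro r hr
        dsimp only
        rw [heatP_scale hy hr]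
        set z := (if 0 ≤ t - y^2*r then h' (t - y^2*r) else 0) with hz
        have hne : (y:ℝ)^2 ≠ 0 := ne_of_gt hy2
        field_simp
    _ = y^2 * ∫ r in Ioi (0:ℝ),
          heatP (y^2*r) y * (if 0 ≤ t - y^2*r then h' (t-y^2*r) else 0) :=
        MeasureTheory.integral_const_mul _ _
    _ = y^2 * ((y^2)⁻¹ * ∫ u in Ioi (0:ℝ), heatP u y * (if 0 ≤ t - u then h' (t-u) else 0)) := by
        rw [h]
    _ = _ := by
        rw [← mul_assoc, mul_inv_cancel₀ (ne_of_gt hy2), one_mul]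

lemma heatP_total_scale {y : ℝ} (hy : 0 < y) :
    ∫ u in Ioi (0:ℝ), heatP u y = ∫ r in Ioi (0:ℝ), heatP r 1 := by
  have hy2 : (0:ℝ) < y^2 := by positivity
  have h0 := integral_comp_mul_left_Ioi (fun u => heatP u y) 0 hy2
  rw [mul_zero, smul_eq_mul] at h0
  have h : (∫ r in Ioi (0:ℝ), heatP (y^2*r) y)
      = (y^2)⁻¹ * ∫ u in Ioi (0:ℝ), heatP u y := h0
  calc ∫ u in Ioi (0:ℝ), heatP u y
      = y^2 * ((y^2)⁻¹ * ∫ u in Ioi (0:ℝ), heatP u y) := by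
        rw [← mul_assoc, mul_inv_cancel₀ (ne_of_gt hy2), one_mul]
    _ = y^2 * ∫ r in Ioi (0:ℝ), heatP (y^2*r) y := by rw [h]
    _ = ∫ r in Ioi (0:ℝ), y^2 * heatP (y^2*r) y := (MeasureTheory.integral_const_mul _ _).symm
    _ = ∫ r in Ioi (0:ℝ), heatP r 1 := by
        apply setIntegral_congr_fun measurableSet_Ioi
        intro r hr
        dsimp only
        rw [heatP_scale hy hr]
        field_simp

lemma dheatP_ball_bound {u y a b αp : ℝ} (hu : 0 < u) (ha : 0 < a) (hya : a ≤ y) (hyb : y ≤ b) :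
    |dheatP u y| * u ^ (αp/2)
      ≤ (1/(2*Real.sqrt Real.pi)) * (Real.exp (-(a^2/4)/u) * u ^ (-((3-αp)/2)))
        + (b^2/(4*Real.sqrt Real.pi)) * (Real.exp (-(a^2/4)/u) * u ^ (-((5-αp)/2))) := by
  refine (abs_dheatP_mul_le hu).trans ?_
  have hy0 : 0 < y := lt_of_lt_of_le ha hya
  have hsp := sqrtpi_pos
  have hE : Real.exp (-(y^2/4)/u) ≤ Real.exp (-(a^2/4)/u) := by
    apply Real.exp_le_exp.mpr
    rw [neg_div, neg_div, neg_le_neg_iff]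
    gcongr
  have hy2b : y^2 ≤ b^2 := by nlinarith
  gcongr <;> positivity


theorem space_holder_estimate_case2 (α : ℝ) (hα : α ∈ Set.Ioo (0:ℝ) 1) :
    ∃ C : ℝ, 0 < C ∧
      ∀ (T : ℝ), 0 < T →
      ∀ (h h' : ℝ → ℝ), (∀ t, HasDerivAt h (h' t) t) →
        ∀ M : ℝ, 0 ≤ M →
        (∀ s ∈ Set.Icc (0:ℝ) T, ∀ t ∈ Set.Icc (0:ℝ) T,
          |h' s - h' t| ≤ M * |s - t| ^ (α/2)) →
        h 0 = 0 → h' 0 = 0 →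
        ∀ t ∈ Set.Icc (0:ℝ) T, ∀ y₁ y₂ : ℝ, 0 ≤ y₂ → y₂ < y₁ →
          2 * (y₁ - y₂) < y₁ + y₂ →
          |dtv h' t y₁ - dtv h' t y₂| ≤ C * M * (y₁ - y₂) ^ α := by
  obtain ⟨hα0, hα1⟩ := hα
  set K := ∫ w in Ioi (0:ℝ), |dheatP w 1| * w ^ (α/2) with hKdef
  have hK0 : 0 ≤ K :=
    setIntegral_nonneg measurableSet_Ioi fun w hw =>
      mul_nonneg (abs_nonneg _) (Real.rpow_nonneg (le_of_lt hw) _)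
  have h2pos : (0:ℝ) < 2 ^ (1-α) := Real.rpow_pos_of_pos two_pos _
  refine ⟨(K+1) * 2 ^ (1-α), by positivity, ?_⟩
  intro T hT h h' hderiv M hM hHol h0 h'0 t ht y₁ y₂ hy₂ hylt hcase
  have hy₂pos : 0 < y₂ := by linarith
  have hy₁pos : 0 < y₁ := lt_trans hy₂pos hylt
  set g : ℝ → ℝ := fun x => if 0 ≤ x then h' x else 0 with hgdef
  -- measurability
  have hmeas_h' : Measurable h' := by
    have : h' = deriv h := funext fun x => ((hderiv x).deriv).symm
    rw [this]; exact measurable_deriv h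
  have hgmeas : Measurable g := Measurable.ite measurableSet_Ici hmeas_h' measurable_const
  have hgdmeas : AEStronglyMeasurable (fun u : ℝ => g (t-u) - g t) (volume.restrict (Ioi 0)) :=
    (((hgmeas.comp (measurable_const.sub measurable_id)).sub
      measurable_const).aestronglyMeasurable)
  -- Hölder property of g
  have hg : ∀ a b : ℝ, a ≤ T → b ≤ T → |g a - g b| ≤ M * |a - b| ^ (α/2) := by
    intro a b haT hbT
    by_cases ha : 0 ≤ a <;> by_cases hb : 0 ≤ b
    · simp only [hgdef, if_pos ha, if_pos hb]
      exact hHol a ⟨ha, haT⟩ b ⟨hb, hbT⟩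
    · simp only [hgdef, if_pos ha, if_neg hb, sub_zero]
      have h1 : |h' a| ≤ M * |a - 0| ^ (α/2) := by
        have := hHol a ⟨ha, haT⟩ 0 ⟨le_refl 0, hT.le⟩
        rwa [h'0, sub_zero] at this
      refine h1.trans ?_
      apply mul_le_mul_of_nonneg_left _ hM
      apply Real.rpow_le_rpow (abs_nonneg _) _ (by positivity)
      rw [sub_zero, abs_of_nonneg ha, abs_of_nonneg (by linarith : 0 ≤ a - b)]
      linarith
    · simp only [hgdef, if_neg ha, if_pos hb, zero_sub, abs_neg]
      have h1 : |h' b| ≤ M * |b - 0| ^ (α/2) := by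
        have := hHol b ⟨hb, hbT⟩ 0 ⟨le_refl 0, hT.le⟩
        rwa [h'0, sub_zero] at this
      refine h1.trans ?_
      apply mul_le_mul_of_nonneg_left _ hM
      apply Real.rpow_le_rpow (abs_nonneg _) _ (by positivity)
      rw [sub_zero, abs_of_nonneg hb, abs_of_nonpos (by linarith : a - b ≤ 0)]
      linarith
    · simp only [hgdef, if_neg ha, if_neg hb, sub_zero, abs_zero]
      positivity
  have hgb : ∀ u : ℝ, 0 < u → |g (t-u) - g t| ≤ M * u ^ (α/2) := by
    intro u hu
    have := hg (t-u) t (by linarith [ht.2]) ht.2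
    rwa [show t - u - t = -u by ring, abs_neg, abs_of_pos hu] at this
  -- the centered function G
  set G : ℝ → ℝ := fun y => ∫ u in Ioi (0:ℝ), heatP u y * (g (t-u) - g t) with hGdef
  set G' : ℝ → ℝ := fun y => ∫ u in Ioi (0:ℝ), dheatP u y * (g (t-u) - g t) with hG'def
  -- integrability of the G-integrand for each y > 0
  have ig1 : ∀ y : ℝ, 0 < y →
      IntegrableOn (fun u => heatP u y * (g (t-u) - g t)) (Ioi 0) := by
    intro y hy
    apply Integrable.mono' ((heatP_mul_rpow_integrable hy hα0 hα1).const_mul M)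
      (((contOn_heatP y).aestronglyMeasurable measurableSet_Ioi).mul hgdmeas)
    filter_upwards [ae_restrict_mem measurableSet_Ioi] with u hu
    simp only [Pi.mul_apply]
    rw [Real.norm_eq_abs, abs_mul, abs_of_nonneg (heatP_nonneg hu hy.le)]
    calc heatP u y * |g (t-u) - g t| ≤ heatP u y * (M * u ^ (α/2)) :=
          mul_le_mul_of_nonneg_left (hgb u hu) (heatP_nonneg hu hy.le)
      _ = M * (heatP u y * u ^ (α/2)) := by ring
  -- decomposition of dtv
  have hdtv : ∀ y : ℝ, 0 < y →
      dtv h' t y = G y + g t * ∫ r in Ioi (0:ℝ), heatP r 1 := by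
    intro y hy
    rw [dtv_rep hy]
    have e1 : ∀ u : ℝ, heatP u y * (if 0 ≤ t - u then h' (t-u) else 0)
        = heatP u y * (g (t-u) - g t) + g t * heatP u y := by
      intro u; simp only [hgdef]; ring
    rw [setIntegral_congr_fun measurableSet_Ioi (fun u _ => e1 u),
      integral_add (ig1 y hy) ((heatP_integrable hy).const_mul (g t)),
      MeasureTheory.integral_const_mul, heatP_total_scale hy]
  have hdiff_eq : dtv h' t y₁ - dtv h' t y₂ = G y₁ - G y₂ := by
    rw [hdtv y₁ hy₁pos, hdtv y₂ hy₂pos]; ring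
    -- derivative of G with bound via dominated convergence
  have hmain : ∀ y₀ ∈ Icc y₂ y₁, HasDerivAt G (G' y₀) y₀ ∧
      Integrable (fun u => dheatP u y₀ * (g (t-u) - g t)) (volume.restrict (Ioi 0)) := by
    intro y₀ hy₀
    have hy₀pos : 0 < y₀ := lt_of_lt_of_le hy₂pos hy₀.1
    have hε : (0:ℝ) < y₂/2 := by linarith
    have hca : (0:ℝ) < (y₂/2)^2/4 := by positivity
    have hbound_int : Integrable (fun u : ℝ =>
        M * ((1/(2*Real.sqrt Real.pi)) * (Real.exp (-((y₂/2)^2/4)/u) * u ^ (-((3-α)/2)))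
          + (((y₁+y₂/2)^2)/(4*Real.sqrt Real.pi)) *
              (Real.exp (-((y₂/2)^2/4)/u) * u ^ (-((5-α)/2)))))
        (volume.restrict (Ioi 0)) :=
      (((master_integrable hca (by linarith)).const_mul _).add
        ((master_integrable hca (by linarith)).const_mul _)).const_mul M
    have main := hasDerivAt_integral_of_dominated_loc_of_deriv_le
      (F := fun y u => heatP u y * (g (t-u) - g t))
      (F' := fun y u => dheatP u y * (g (t-u) - g t))
      (x₀ := y₀) (s := Metric.ball y₀ (y₂/2))
      (bound := fun u : ℝ =>
        M * ((1/(2*Real.sqrt Real.pi)) * (Real.exp (-((y₂/2)^2/4)/u) * u ^ (-((3-α)/2)))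
          + (((y₁+y₂/2)^2)/(4*Real.sqrt Real.pi)) *
              (Real.exp (-((y₂/2)^2/4)/u) * u ^ (-((5-α)/2)))))
      (Metric.ball_mem_nhds y₀ hε)
      (Filter.Eventually.of_forall fun y =>
        ((contOn_heatP y).aestronglyMeasurable measurableSet_Ioi).mul hgdmeas)
      (ig1 y₀ hy₀pos)
      (((contOn_dheatP y₀).aestronglyMeasurable measurableSet_Ioi).mul hgdmeas)
      ?_ hbound_int ?_
    · exact ⟨main.2, main.1⟩
    · filter_upwards [ae_restrict_mem measurableSet_Ioi] with u hu
      intro y hy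
      have hdist : |y - y₀| < y₂/2 := by
        have := Metric.mem_ball.mp hy
        rwa [Real.dist_eq] at this
      obtain ⟨hd1, hd2⟩ := abs_lt.mp hdist
      have h1 : y₂/2 ≤ y := by linarith [hy₀.1]
      have h2 : y ≤ y₁ + y₂/2 := by linarith [hy₀.2]
      rw [Real.norm_eq_abs, abs_mul]
      calc |dheatP u y| * |g (t-u) - g t| ≤ |dheatP u y| * (M * u^(α/2)) :=
            mul_le_mul_of_nonneg_left (hgb u hu) (abs_nonneg _)
        _ = M * (|dheatP u y| * u^(α/2)) := by ring
        _ ≤ _ := mul_le_mul_of_nonneg_left (dheatP_ball_bound hu hε h1 h2) hM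
    · filter_upwards [ae_restrict_mem measurableSet_Ioi] with u hu
      intro y hy
      exact (hasDerivAt_heatP hu y).mul_const _
  -- bound on the derivative
  have hbnd : ∀ y₀ ∈ Icc y₂ y₁, ‖G' y₀‖ ≤ M * (K * y₂ ^ (α-1)) := by
    intro y₀ hy₀
    have hy₀pos : 0 < y₀ := lt_of_lt_of_le hy₂pos hy₀.1
    have hint := (hmain y₀ hy₀).2
    calc ‖G' y₀‖ ≤ ∫ u in Ioi (0:ℝ), ‖dheatP u y₀ * (g (t-u) - g t)‖ :=
          norm_integral_le_integral_norm _
      _ ≤ ∫ u in Ioi (0:ℝ), M * (|dheatP u y₀| * u ^ (α/2)) := by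
          apply setIntegral_mono_on hint.norm
            ((moment_integrable hy₀pos hα0 hα1).const_mul M) measurableSet_Ioi
          intro u hu
          rw [Real.norm_eq_abs, abs_mul]
          calc |dheatP u y₀| * |g (t-u) - g t| ≤ |dheatP u y₀| * (M * u^(α/2)) :=
                mul_le_mul_of_nonneg_left (hgb u hu) (abs_nonneg _)
            _ = M * (|dheatP u y₀| * u ^ (α/2)) := by ring
      _ = M * (y₀ ^ (α-1) * K) := by
          rw [MeasureTheory.integral_const_mul, moment_scale hy₀pos]
      _ ≤ M * (y₂ ^ (α-1) * K) := by
          apply mul_le_mul_of_nonneg_left _ hM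
          apply mul_le_mul_of_nonneg_right _ hK0
          exact Real.rpow_le_rpow_of_nonpos hy₂pos hy₀.1 (by linarith)
      _ = M * (K * y₂ ^ (α-1)) := by ring
  -- mean value inequality
  have hmvt := Convex.norm_image_sub_le_of_norm_hasDerivWithin_le
    (fun x hx => ((hmain x hx).1).hasDerivWithinAt) hbnd (convex_Icc y₂ y₁)
    (left_mem_Icc.mpr hylt.le) (right_mem_Icc.mpr hylt.le)
  have hdpos : 0 < y₁ - y₂ := by linarith
  rw [hdiff_eq, ← Real.norm_eq_abs]
  refine hmvt.trans ?_
  rw [Real.norm_eq_abs, abs_of_pos hdpos]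
  have hstep : y₂ ^ (α-1) ≤ 2 ^ (1-α) * (y₁-y₂) ^ (α-1) := by
    have h1 : (0:ℝ) < (y₁-y₂)/2 := by linarith
    have h2 : (y₁-y₂)/2 ≤ y₂ := by linarith
    refine (Real.rpow_le_rpow_of_nonpos h1 h2 (by linarith : α - 1 ≤ 0)).trans_eq ?_
    rw [Real.div_rpow hdpos.le (by norm_num : (0:ℝ) ≤ 2), div_eq_mul_inv,
      ← Real.rpow_neg (by norm_num : (0:ℝ) ≤ 2), show -(α-1) = 1-α by ring]
    ring
  calc M * (K * y₂ ^ (α-1)) * (y₁-y₂)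
      ≤ M * (K * (2 ^ (1-α) * (y₁-y₂) ^ (α-1))) * (y₁-y₂) := by
        apply mul_le_mul_of_nonneg_right _ hdpos.le
        exact mul_le_mul_of_nonneg_left (mul_le_mul_of_nonneg_left hstep hK0) hM
    _ = K * 2 ^ (1-α) * M * ((y₁-y₂) ^ (α-1) * (y₁-y₂)) := by ring
    _ = K * 2 ^ (1-α) * M * (y₁-y₂) ^ α := by
        rw [← Real.rpow_add_one (ne_of_gt hdpos)]
        norm_num
    _ ≤ (K+1) * 2 ^ (1-α) * M * (y₁-y₂) ^ α := by
        apply mul_le_mul_of_nonneg_right _ (Real.rpow_nonneg hdpos.le _)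
        apply mul_le_mul_of_nonneg_right _ hM
        exact mul_le_mul_of_nonneg_right (by linarith) h2pos.le
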